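/- Let k be an algebraically closed field and let a, b ≥ 3 be integers. Let J_{2a} be the 2a×2a matrix whose (i, 2a+1−i) entry is 1 for i ≤ a and −1 for i > a (all other entries 0), and similarly J_{2b}; let Sp_{2a}(k) = {g : gᵀJ_{2a}g = J_{2a}} and Sp_{2b}(k) = {g : gᵀJ_{2b}g = J_{2b}}, acting on the space M_{2a×2b}(k) of 2a×2b matrices by (g,h)·A = gAhᵀ. Define Q(A) = Σ_{i=1}^{a} Σ_{j=1}^{2b} ε_j A_{i,j}A_{2a+1−i,2b+1−j}, where ε_j = 1 for j ≤ b and ε_j = −1 for j > b. Then there are infinitely many Sp_{2a}(k) × Sp_{2b}(k)-orbits on the set of singular 1-spaces, i.e. on the set of lines ⟨A⟩ with 0 ≠ A ∈ M_{2a×2b}(k) and Q(A) = 0. -/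

import Mathlib

open Matrix

def sympJ (k : Type*) [Field k] (n : ℕ) : Matrix (Fin (2 * n)) (Fin (2 * n)) k :=
  Matrix.of fun i j : Fin (2 * n) =>
    if j = i.rev then (if (i : ℕ) < n then (1 : k) else -1) else 0

def qSymp {k : Type*} [Field k] {a b : ℕ} (A : Matrix (Fin (2 * a)) (Fin (2 * b)) k) : k :=
  ∑ i : Fin (2 * a), if (i : ℕ) < a then
    ∑ j : Fin (2 * b), (if (j : ℕ) < b then (1 : k) else -1) * (A i j * A i.rev j.rev)
  else 0

section Aux

variable {k : Type*} [Field k] {a b : ℕ}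

/-- Right multiplication by `sympJ` permutes columns with signs. -/
lemma mul_sympJ {m : Type*} [Fintype m] (M : Matrix m (Fin (2 * n)) k) (i : m)
    (j : Fin (2 * n)) :
    (M * sympJ k n) i j = (if (j : ℕ) < n then (-1 : k) else 1) * M i j.rev := by
  rw [Matrix.mul_apply]
  rw [Finset.sum_eq_single j.rev]
  · have hlt := j.isLt
    have hrev : (j.rev : ℕ) = 2 * n - (j + 1) := by simp [Fin.val_rev]
    simp only [sympJ, Matrix.of_apply, if_pos (Fin.rev_rev j).symm]
    by_cases hj : (j : ℕ) < n
    · rw [if_pos hj, if_neg (show ¬ ((j.rev : ℕ) < n) by rw [hrev]; omega)]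
      ring
    · rw [if_neg hj, if_pos (show (j.rev : ℕ) < n by rw [hrev]; omega)]
      ring
  · intro l _ hl
    have : j ≠ l.rev := by
      intro h; exact hl (by rw [h, Fin.rev_rev])
    simp [sympJ, this]
  · simp

lemma sympJ_mul_sympJ : sympJ k n * sympJ k n = -1 := by
  ext i j
  rw [mul_sympJ]
  by_cases hij : i = j
  · subst hij
    have hJv : sympJ k n i i.rev = if (i : ℕ) < n then (1 : k) else -1 := by
      simp [sympJ]
    rw [hJv, Matrix.neg_apply, Matrix.one_apply_eq]
    by_cases hi : (i : ℕ) < n <;> simp [hi]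
  · have hne : j.rev ≠ i.rev := fun h => hij (Fin.rev_injective h).symm
    have hJv : sympJ k n i j.rev = 0 := by
      simp [sympJ, hne]
    rw [hJv, Matrix.neg_apply, Matrix.one_apply_ne hij]
    ring

/-- The conjugation-covariant matrix attached to `A`. -/
def NN (A : Matrix (Fin (2 * a)) (Fin (2 * b)) k) : Matrix (Fin (2 * a)) (Fin (2 * a)) k :=
  A * sympJ k b * Aᵀ * sympJ k a

/-- `F_A(x) = det (x·1 + N(A))`, whose nonzero roots-up-to-ratio are orbit invariants. -/
def FF (A : Matrix (Fin (2 * a)) (Fin (2 * b)) k) (x : k) : k :=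
  Matrix.det (x • (1 : Matrix (Fin (2 * a)) (Fin (2 * a)) k) + NN A)

lemma FF_rel {A B : Matrix (Fin (2 * a)) (Fin (2 * b)) k}
    {g : Matrix (Fin (2 * a)) (Fin (2 * a)) k} (hg : gᵀ * sympJ k a * g = sympJ k a)
    {h : Matrix (Fin (2 * b)) (Fin (2 * b)) k} (hh : hᵀ * sympJ k b * h = sympJ k b)
    (c : kˣ) (hB : g * A * hᵀ = (c : k) • B) (x : k) :
    (FF B x = 0 ↔ FF A ((c : k) ^ 2 * x) = 0) := by
  set J := sympJ k a with hJ
  set g' : Matrix (Fin (2 * a)) (Fin (2 * a)) k := -(J * gᵀ * J) with hg'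
  have hJJ : J * J = -1 := sympJ_mul_sympJ
  have h1 : g' * g = 1 := by
    rw [hg']
    calc -(J * gᵀ * J) * g = -(J * (gᵀ * J * g)) := by
          simp only [Matrix.neg_mul, Matrix.mul_assoc]
      _ = -(J * J) := by rw [hg]
      _ = 1 := by rw [hJJ]; simp
  have h2 : g * g' = 1 := mul_eq_one_comm.mp h1
  have hgT : gᵀ * J = J * g' := by
    calc gᵀ * J = gᵀ * J * (g * g') := by rw [h2, Matrix.mul_one]
      _ = (gᵀ * J * g) * g' := by simp only [Matrix.mul_assoc]
      _ = J * g' := by rw [hg]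
  have hc : (c : k) ≠ 0 := c.ne_zero
  have hB' : B = ((c : k)⁻¹) • (g * A * hᵀ) := by
    rw [hB, smul_smul, inv_mul_cancel₀ hc, one_smul]
  have hmid : (g * A * hᵀ) * sympJ k b * (g * A * hᵀ)ᵀ * J
      = g * NN A * g' := by
    have e1 : (g * A * hᵀ)ᵀ = h * (Aᵀ * gᵀ) := by
      simp [Matrix.transpose_mul, Matrix.mul_assoc]
    rw [e1]
    calc g * A * hᵀ * sympJ k b * (h * (Aᵀ * gᵀ)) * J
        = g * A * (hᵀ * sympJ k b * h) * (Aᵀ * (gᵀ * J)) := by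
          simp only [Matrix.mul_assoc]
      _ = g * A * sympJ k b * (Aᵀ * (J * g')) := by rw [hh, hgT]
      _ = g * NN A * g' := by
          simp only [NN, Matrix.mul_assoc, hJ]
  have hNNB : NN B = (((c : k)⁻¹) ^ 2) • (g * NN A * g') := by
    rw [NN, hB']
    simp only [Matrix.transpose_smul, Matrix.smul_mul, Matrix.mul_smul, smul_smul]
    rw [hmid, sq]
  have hkey : x • (1 : Matrix (Fin (2 * a)) (Fin (2 * a)) k) + NN B
      = (((c : k)⁻¹) ^ 2) • (g * (((c : k) ^ 2 * x) • 1 + NN A) * g') := by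
    rw [hNNB, Matrix.mul_add, Matrix.add_mul, smul_add]
    congr 1
    have : g * (((c : k) ^ 2 * x) • (1 : Matrix (Fin (2 * a)) (Fin (2 * a)) k)) * g'
        = ((c : k) ^ 2 * x) • (1 : Matrix (Fin (2 * a)) (Fin (2 * a)) k) := by
      rw [Matrix.mul_smul, Matrix.smul_mul, Matrix.mul_one, h2]
    rw [this, smul_smul]
    rw [show ((c : k)⁻¹) ^ 2 * ((c : k) ^ 2 * x) = x by field_simp]
  have hdg : Matrix.det g * Matrix.det g' ≠ 0 := by
    have : Matrix.det g * Matrix.det g' = 1 := by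
      rw [← Matrix.det_mul, h2, Matrix.det_one]
    rw [this]; exact one_ne_zero
  have hs : ((((c : k)⁻¹) ^ 2) ^ (Fintype.card (Fin (2 * a)))) ≠ 0 :=
    pow_ne_zero _ (pow_ne_zero _ (inv_ne_zero hc))
  have hdg1 : Matrix.det g ≠ 0 := (mul_ne_zero_iff.mp hdg).1
  have hdg2 : Matrix.det g' ≠ 0 := (mul_ne_zero_iff.mp hdg).2
  rw [FF, FF, hkey, Matrix.det_smul, Matrix.det_mul, Matrix.det_mul]
  simp [mul_eq_zero, hs, hdg1, hdg2]

/-- The family `A_W`: entries `1` at `(p,p)` for `p < 3` and `W p` at `(rev p, rev p)`. -/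
def fam (k : Type*) [Field k] (a b : ℕ) (W : ℕ → k) : Matrix (Fin (2 * a)) (Fin (2 * b)) k :=
  Matrix.of fun i j =>
    (if (i : ℕ) = (j : ℕ) ∧ (i : ℕ) < 3 then (1 : k) else 0) +
    (if (i.rev : ℕ) = (j.rev : ℕ) ∧ (i.rev : ℕ) < 3 then W (i.rev : ℕ) else 0)

/-- The diagonal of `N(fam W)`. -/
def dd (k : Type*) [Field k] (a : ℕ) (W : ℕ → k) : Fin (2 * a) → k :=
  fun i => if (i : ℕ) < 3 then -W (i : ℕ) else
    if (i.rev : ℕ) < 3 then -W (i.rev : ℕ) else 0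

lemma NN_fam (ha : 3 ≤ a) (hb : 3 ≤ b) (W : ℕ → k) :
    NN (fam k a b W) = Matrix.diagonal (dd k a W) := by
  ext i j
  set A := fam k a b W with hA
  have hNe : NN A i j = (if (j : ℕ) < a then (-1:k) else 1) *
      ∑ q : Fin (2 * b), ((if (q : ℕ) < b then (-1:k) else 1) * A i q.rev) * A j.rev q := by
    rw [NN, mul_sympJ]
    congr 1
    rw [Matrix.mul_apply]
    refine Finset.sum_congr rfl fun q _ => ?_
    rw [mul_sympJ, Matrix.transpose_apply]
  rw [hNe]
  have hia := i.isLt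
  have hja := j.isLt
  have hirev : (i.rev : ℕ) = 2 * a - ((i : ℕ) + 1) := by simp [Fin.val_rev]
  have hjrev : (j.rev : ℕ) = 2 * a - ((j : ℕ) + 1) := by simp [Fin.val_rev]
  have hApp : ∀ (x : Fin (2 * a)) (y : Fin (2 * b)), A x y =
      (if (x : ℕ) = (y : ℕ) ∧ (x : ℕ) < 3 then (1 : k) else 0) +
      (if (x.rev : ℕ) = (y.rev : ℕ) ∧ (x.rev : ℕ) < 3 then W (x.rev : ℕ) else 0) :=
    fun x y => rfl
  have hji : ((j : ℕ) = (i : ℕ)) ↔ j = i := by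
    constructor
    · intro h; exact Fin.ext h
    · intro h; rw [h]
  by_cases hi : (i : ℕ) < 3
  · -- top rows
    have hq0lt : (i : ℕ) < 2 * b := by omega
    set q0 : Fin (2 * b) := Fin.rev ⟨(i : ℕ), hq0lt⟩ with hq0
    have hq0v : (q0 : ℕ) = 2 * b - ((i : ℕ) + 1) := by simp [hq0, Fin.val_rev]
    have hq0r : (q0.rev : ℕ) = (i : ℕ) := by simp [hq0, Fin.rev_rev]
    have hsum : ∑ q : Fin (2 * b), ((if (q : ℕ) < b then (-1:k) else 1) * A i q.rev) * A j.rev q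
        = if (j : ℕ) = (i : ℕ) then W (j : ℕ) else 0 := by
      rw [Finset.sum_eq_single q0]
      · have h1 : A i q0.rev = 1 := by
          rw [hApp]
          rw [if_pos ⟨hq0r.symm, hi⟩]
          rw [if_neg (by rw [hirev]; rintro ⟨-, h⟩; omega)]
          ring
        have h2 : A j.rev q0 = if (j : ℕ) = (i : ℕ) then W (j : ℕ) else 0 := by
          rw [hApp]
          rw [if_neg (by rw [hjrev, hq0v]; rintro ⟨h1, h2⟩; omega)]
          simp only [Fin.rev_rev]
          rw [hq0r]
          by_cases hcase : (j : ℕ) = (i : ℕ)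
          · rw [if_pos ⟨hcase, by omega⟩, if_pos hcase]; ring
          · rw [if_neg (fun hc => hcase hc.1), if_neg hcase]; ring
        rw [h1, h2, if_neg (by rw [hq0v]; omega)]
        ring
      · intro q _ hq
        have h1 : A i q.rev = 0 := by
          rw [hApp]
          rw [if_neg ?_, if_neg (by rw [hirev]; rintro ⟨-, h⟩; omega)]
          · ring
          · rintro ⟨h1, -⟩
            exact hq (by
              have : q.rev = (⟨(i : ℕ), hq0lt⟩ : Fin (2 * b)) := Fin.ext h1.symm
              rw [hq0, ← this, Fin.rev_rev])
        rw [h1]; ring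
      · simp
    rw [hsum]
    by_cases hcase : j = i
    · subst hcase
      rw [if_pos rfl, if_pos (by omega), Matrix.diagonal_apply_eq]
      rw [dd, if_pos hi]; ring
    · rw [if_neg (fun h => hcase (hji.mp h)), Matrix.diagonal_apply_ne _ (Ne.symm hcase)]
      ring
  · by_cases hi2 : (i.rev : ℕ) < 3
    · -- bottom rows
      have hq0lt : (i.rev : ℕ) < 2 * b := by omega
      set q0 : Fin (2 * b) := ⟨(i.rev : ℕ), hq0lt⟩ with hq0
      have hq0v : (q0 : ℕ) = (i.rev : ℕ) := rfl
      have hq0r : (q0.rev : ℕ) = 2 * b - ((i.rev : ℕ) + 1) := by simp [hq0, Fin.val_rev]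
      have hsum : ∑ q : Fin (2 * b),
          ((if (q : ℕ) < b then (-1:k) else 1) * A i q.rev) * A j.rev q
          = if (j : ℕ) = (i : ℕ) then -W (i.rev : ℕ) else 0 := by
        rw [Finset.sum_eq_single q0]
        · have h1 : A i q0.rev = W (i.rev : ℕ) := by
            rw [hApp]
            rw [if_neg (by rintro ⟨-, h⟩; exact hi h)]
            rw [Fin.rev_rev, if_pos ⟨rfl, hi2⟩]
            ring
          have h2 : A j.rev q0 = if (j : ℕ) = (i : ℕ) then (1 : k) else 0 := by
            rw [hApp]
            simp only [Fin.rev_rev]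
            rw [if_neg (show ¬ ((j : ℕ) = (q0.rev : ℕ) ∧ (j : ℕ) < 3) by
              rw [hq0r]; rintro ⟨h1, h2⟩; omega)]
            by_cases hcase : (j : ℕ) = (i : ℕ)
            · have hjri : (j.rev : ℕ) = (i.rev : ℕ) := by rw [hjrev, hirev, hcase]
              rw [if_pos ⟨by rw [hjri, hq0v], by rw [hjri]; exact hi2⟩, if_pos hcase]
              ring
            · rw [if_neg (by
                rintro ⟨h1, -⟩
                rw [hjrev, hq0v, hirev] at h1
                exact hcase (by omega)), if_neg hcase]
              ring
          rw [h1, h2, if_pos (by rw [hq0v]; omega)]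
          by_cases hcase : (j : ℕ) = (i : ℕ) <;> simp [hcase]
        · intro q _ hq
          have h1 : A i q.rev = 0 := by
            rw [hApp]
            rw [if_neg (by rintro ⟨-, h⟩; omega), if_neg ?_]
            · ring
            · rw [Fin.rev_rev]
              rintro ⟨h1, -⟩
              exact hq (Fin.ext (by rw [hq0v, ← h1]))
          rw [h1]; ring
        · simp
      rw [hsum]
      by_cases hcase : j = i
      · subst hcase
        rw [if_pos rfl, if_neg (by omega), Matrix.diagonal_apply_eq]
        rw [dd, if_neg hi, if_pos hi2]
        ring
      · rw [if_neg (fun h => hcase (hji.mp h)), Matrix.diagonal_apply_ne _ (Ne.symm hcase)]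
        ring
    · -- zero rows
      have hsum : ∑ q : Fin (2 * b),
          ((if (q : ℕ) < b then (-1:k) else 1) * A i q.rev) * A j.rev q = 0 := by
        refine Finset.sum_eq_zero fun q _ => ?_
        have h1 : A i q.rev = 0 := by
          rw [hApp]
          rw [if_neg (by rintro ⟨-, h⟩; exact hi h), if_neg (by rintro ⟨-, h⟩; exact hi2 h)]
          ring
        rw [h1]; ring
      rw [hsum]
      have hdd : dd k a W i = 0 := by rw [dd, if_neg hi, if_neg hi2]
      by_cases hcase : j = i
      · subst hcase; rw [Matrix.diagonal_apply_eq, hdd]; ring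
      · rw [Matrix.diagonal_apply_ne _ (Ne.symm hcase)]; ring

lemma FF_fam (ha : 3 ≤ a) (hb : 3 ≤ b) (W : ℕ → k) (x : k) :
    FF (fam k a b W) x = ∏ i : Fin (2 * a), (x + dd k a W i) := by
  rw [FF, NN_fam ha hb, Matrix.smul_one_eq_diagonal, Matrix.diagonal_add, Matrix.det_diagonal]

lemma FF_fam_root (ha : 3 ≤ a) (hb : 3 ≤ b) (W : ℕ → k) (m : ℕ) (hm : m < 3) :
    FF (fam k a b W) (W m) = 0 := by
  rw [FF_fam ha hb]
  refine Finset.prod_eq_zero (Finset.mem_univ (⟨m, by omega⟩ : Fin (2 * a))) ?_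
  have : dd k a W (⟨m, by omega⟩ : Fin (2 * a)) = -W m := by
    rw [dd, if_pos (show ((⟨m, by omega⟩ : Fin (2 * a)) : ℕ) < 3 from hm)]
  rw [this]; ring

lemma FF_fam_root_mem (ha : 3 ≤ a) (hb : 3 ≤ b) (W : ℕ → k) {x : k} (hx0 : x ≠ 0)
    (hx : FF (fam k a b W) x = 0) : x = W 0 ∨ x = W 1 ∨ x = W 2 := by
  rw [FF_fam ha hb] at hx
  obtain ⟨i, -, hi⟩ := Finset.prod_eq_zero_iff.mp hx
  have hxd : x = -dd k a W i := eq_neg_of_add_eq_zero_left hi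
  rw [dd] at hxd
  by_cases h1 : (i : ℕ) < 3
  · rw [if_pos h1, neg_neg] at hxd
    have : (i : ℕ) = 0 ∨ (i : ℕ) = 1 ∨ (i : ℕ) = 2 := by omega
    rcases this with h | h | h <;> rw [h] at hxd <;> tauto
  · rw [if_neg h1] at hxd
    by_cases h2 : (i.rev : ℕ) < 3
    · rw [if_pos h2, neg_neg] at hxd
      have : (i.rev : ℕ) = 0 ∨ (i.rev : ℕ) = 1 ∨ (i.rev : ℕ) = 2 := by omega
      rcases this with h | h | h <;> rw [h] at hxd <;> tauto
    · rw [if_neg h2] at hxd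
      exact absurd (by rw [hxd]; ring) hx0

lemma fam_ne_zero (ha : 3 ≤ a) (hb : 3 ≤ b) (W : ℕ → k) : fam k a b W ≠ 0 := by
  intro h
  have h0 := congrFun (congrFun h (⟨0, by omega⟩ : Fin (2 * a))) (⟨0, by omega⟩ : Fin (2 * b))
  have hrv : (((⟨0, by omega⟩ : Fin (2 * a)).rev : ℕ)) = 2 * a - 1 := by
    simp [Fin.val_rev]
  rw [show fam k a b W (⟨0, by omega⟩ : Fin (2 * a)) (⟨0, by omega⟩ : Fin (2 * b)) =
      (if (0 : ℕ) = 0 ∧ (0 : ℕ) < 3 then (1:k) else 0) +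
      (if ((((⟨0, by omega⟩ : Fin (2 * a)).rev : ℕ)) = (((⟨0, by omega⟩ : Fin (2 * b)).rev : ℕ))
          ∧ (((⟨0, by omega⟩ : Fin (2 * a)).rev : ℕ)) < 3) then W (((⟨0, by omega⟩ :
          Fin (2 * a)).rev : ℕ)) else 0) from rfl] at h0
  rw [if_pos ⟨rfl, by omega⟩, if_neg (by rw [hrv]; rintro ⟨-, hc⟩; omega)] at h0
  simp at h0

lemma qSymp_fam (ha : 3 ≤ a) (hb : 3 ≤ b) (W : ℕ → k) (hW : W 0 + W 1 + W 2 = 0) :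
    qSymp (fam k a b W) = 0 := by
  rw [qSymp]
  have hApp : ∀ (x : Fin (2 * a)) (y : Fin (2 * b)), fam k a b W x y =
      (if (x : ℕ) = (y : ℕ) ∧ (x : ℕ) < 3 then (1 : k) else 0) +
      (if (x.rev : ℕ) = (y.rev : ℕ) ∧ (x.rev : ℕ) < 3 then W (x.rev : ℕ) else 0) :=
    fun x y => rfl
  have hstep : ∀ i : Fin (2 * a),
      (if (i : ℕ) < a then
        ∑ j : Fin (2 * b), (if (j : ℕ) < b then (1:k) else -1) *
          (fam k a b W i j * fam k a b W i.rev j.rev)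
      else 0) = if (i : ℕ) < 3 then W (i : ℕ) else 0 := by
    intro i
    have hia := i.isLt
    have hirev : (i.rev : ℕ) = 2 * a - ((i : ℕ) + 1) := by simp [Fin.val_rev]
    by_cases hi : (i : ℕ) < a
    · rw [if_pos hi]
      have hterm : ∀ j : Fin (2 * b), (if (j : ℕ) < b then (1:k) else -1) *
          (fam k a b W i j * fam k a b W i.rev j.rev) =
          if (i : ℕ) = (j : ℕ) ∧ (i : ℕ) < 3 then (if (j : ℕ) < b then (1:k) else -1) * W (i : ℕ)
          else 0 := by
        intro j
        have hcond1 : ¬ ((i.rev : ℕ) = (j.rev : ℕ) ∧ (i.rev : ℕ) < 3) := by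
          rw [hirev]; rintro ⟨-, hc⟩; omega
        have hA1 : fam k a b W i j = if (i : ℕ) = (j : ℕ) ∧ (i : ℕ) < 3 then (1:k) else 0 := by
          rw [hApp, if_neg hcond1]
          ring
        have hA2 : fam k a b W i.rev j.rev =
            if (i : ℕ) = (j : ℕ) ∧ (i : ℕ) < 3 then W (i : ℕ) else 0 := by
          rw [hApp]
          rw [if_neg hcond1]
          simp only [Fin.rev_rev]
          rw [zero_add]
        rw [hA1, hA2]
        by_cases hc : (i : ℕ) = (j : ℕ) ∧ (i : ℕ) < 3
        · rw [if_pos hc, if_pos hc, if_pos hc]; ring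
        · rw [if_neg hc, if_neg hc, if_neg hc]; ring
      rw [Finset.sum_congr rfl (fun j _ => hterm j)]
      by_cases hi3 : (i : ℕ) < 3
      · rw [if_pos hi3]
        have hjlt : (i : ℕ) < 2 * b := by omega
        rw [Finset.sum_eq_single (⟨(i : ℕ), hjlt⟩ : Fin (2 * b))]
        · rw [if_pos ⟨rfl, hi3⟩, if_pos (show (i : ℕ) < b by omega)]
          ring
        · intro j _ hj
          rw [if_neg (by rintro ⟨hc, -⟩; exact hj (Fin.ext hc.symm))]
        · simp
      · rw [if_neg hi3]
        exact Finset.sum_eq_zero fun j _ => if_neg (by rintro ⟨-, hc⟩; exact hi3 hc)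
    · rw [if_neg hi, if_neg (by omega), eq_comm]
  rw [Finset.sum_congr rfl (fun i _ => hstep i)]
  have hrange := Fin.sum_univ_eq_sum_range (fun m : ℕ => if m < 3 then W m else 0) (2 * a)
  rw [hrange, Finset.range_eq_Ico,
    ← Finset.sum_Ico_consecutive _ (Nat.zero_le 3) (by omega : 3 ≤ 2 * a)]
  have h2 : (∑ m ∈ Finset.Ico 3 (2 * a), if m < 3 then W m else 0) = 0 :=
    Finset.sum_eq_zero fun m hm => if_neg (by have := (Finset.mem_Ico.mp hm).1; omega)
  rw [h2, add_zero, ← Finset.range_eq_Ico,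
    Finset.sum_range_succ, Finset.sum_range_succ, Finset.sum_range_one]
  norm_num
  linear_combination hW

end Aux

theorem stmt17 (k : Type*) [Field k] [IsAlgClosed k] (a b : ℕ) (ha : 3 ≤ a) (hb : 3 ≤ b) :
    Infinite (Quot (fun A B : {A : Matrix (Fin (2 * a)) (Fin (2 * b)) k //
        A ≠ 0 ∧ qSymp A = 0} =>
      ∃ g : Matrix (Fin (2 * a)) (Fin (2 * a)) k, gᵀ * sympJ k a * g = sympJ k a ∧
      ∃ h : Matrix (Fin (2 * b)) (Fin (2 * b)) k, hᵀ * sympJ k b * h = sympJ k b ∧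
      ∃ c : kˣ, g * A.1 * hᵀ = (c : k) • B.1)) := by
  by_contra hfin
  rw [not_infinite_iff_finite] at hfin
  classical
  -- the family
  set Wf : k → ℕ → k := fun t m => if m = 0 then 1 else if m = 1 then t else -1 - t with hWf
  have hW0 : ∀ t, Wf t 0 = 1 := fun t => rfl
  have hW1 : ∀ t, Wf t 1 = t := fun t => rfl
  have hW2 : ∀ t, Wf t 2 = -1 - t := fun t => rfl
  have hWsum : ∀ t : k, Wf t 0 + Wf t 1 + Wf t 2 = 0 := by
    intro t; rw [hW0, hW1, hW2]; ring
  set elt : k → {A : Matrix (Fin (2 * a)) (Fin (2 * b)) k // A ≠ 0 ∧ qSymp A = 0} :=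
    fun t => ⟨fam k a b (Wf t), fam_ne_zero ha hb _, qSymp_fam ha hb _ (hWsum t)⟩ with helt
  set ψ : k → Quot (fun A B : {A : Matrix (Fin (2 * a)) (Fin (2 * b)) k //
        A ≠ 0 ∧ qSymp A = 0} =>
      ∃ g : Matrix (Fin (2 * a)) (Fin (2 * a)) k, gᵀ * sympJ k a * g = sympJ k a ∧
      ∃ h : Matrix (Fin (2 * b)) (Fin (2 * b)) k, hᵀ * sympJ k b * h = sympJ k b ∧
      ∃ c : kˣ, g * A.1 * hᵀ = (c : k) • B.1) := fun t => Quot.mk _ (elt t) with hψ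
  -- the invariant
  set Λ : {A : Matrix (Fin (2 * a)) (Fin (2 * b)) k // A ≠ 0 ∧ qSymp A = 0} → Set k :=
    fun A => {r : k | r ≠ 0 ∧ ∃ x : k, x ≠ 0 ∧ FF A.1 x = 0 ∧ FF A.1 (r * x) = 0} with hΛdef
  have hΛ : ∀ A B, (∃ g : Matrix (Fin (2 * a)) (Fin (2 * a)) k,
      gᵀ * sympJ k a * g = sympJ k a ∧
      ∃ h : Matrix (Fin (2 * b)) (Fin (2 * b)) k, hᵀ * sympJ k b * h = sympJ k b ∧
      ∃ c : kˣ, g * A.1 * hᵀ = (c : k) • B.1) → Λ A = Λ B := by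
    rintro A B ⟨g, hg, h, hh, c, hB⟩
    have hc : (c : k) ≠ 0 := c.ne_zero
    have key := fun x => FF_rel hg hh c hB x
    ext r
    simp only [hΛdef, Set.mem_setOf_eq]
    constructor
    · rintro ⟨hr0, x, hx0, h1, h2⟩
      refine ⟨hr0, ((c : k)⁻¹) ^ 2 * x, mul_ne_zero (pow_ne_zero _ (inv_ne_zero hc)) hx0, ?_, ?_⟩
      · rw [key]
        rw [show (c : k) ^ 2 * (((c : k)⁻¹) ^ 2 * x) = x by field_simp]
        exact h1
      · rw [key]
        rw [show (c : k) ^ 2 * (r * (((c : k)⁻¹) ^ 2 * x)) = r * x by field_simp]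
        exact h2
    · rintro ⟨hr0, x, hx0, h1, h2⟩
      refine ⟨hr0, (c : k) ^ 2 * x, mul_ne_zero (pow_ne_zero _ hc) hx0, ?_, ?_⟩
      · rw [← key]; exact h1
      · rw [show r * ((c : k) ^ 2 * x) = (c : k) ^ 2 * (r * x) by ring, ← key]
        exact h2
  set ΛQ := Quot.lift Λ hΛ with hΛQ
  obtain ⟨q, hq⟩ := Finite.exists_infinite_fiber ψ
  have hqinf : (ψ ⁻¹' {q}).Infinite := Set.infinite_coe_iff.mp hq
  obtain ⟨u, hu⟩ := hqinf.nonempty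
  set T : Set k := {1, u, -1 - u} with hT
  have hTfin : T.Finite := (Set.finite_singleton _).insert _ |>.insert _
  set S : Set k := Set.image2 (fun p q => p * q⁻¹) T T with hS
  have hSfin : S.Finite := Set.Finite.image2 _ hTfin hTfin
  have hroots : ∀ t : k, ∀ x : k, x ≠ 0 → FF (fam k a b (Wf t)) x = 0 →
      x ∈ ({1, t, -1 - t} : Set k) := by
    intro t x hx0 hx
    rcases FF_fam_root_mem ha hb _ hx0 hx with h | h | h
    · rw [hW0] at h; exact Or.inl h
    · rw [hW1] at h; exact Or.inr (Or.inl h)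
    · rw [hW2] at h; exact Or.inr (Or.inr h)
  have hsub : ψ ⁻¹' {q} ⊆ insert 0 S := by
    intro t ht
    rcases eq_or_ne t 0 with ht0 | ht0
    · exact Set.mem_insert_iff.mpr (Or.inl ht0)
    refine Set.mem_insert_iff.mpr (Or.inr ?_)
    have hψtu : ψ t = ψ u := by
      have h1 : ψ t = q := ht
      have h2 : ψ u = q := hu
      rw [h1, h2]
    have hinv : Λ (elt t) = Λ (elt u) := by
      have h' : ΛQ (ψ t) = ΛQ (ψ u) := congrArg ΛQ hψtu
      exact h'
    have htt : t ∈ Λ (elt t) := by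
      refine ⟨ht0, 1, one_ne_zero, ?_, ?_⟩
      · have := FF_fam_root ha hb (Wf t) 0 (by omega)
        rwa [hW0] at this
      · have := FF_fam_root ha hb (Wf t) 1 (by omega)
        rw [hW1] at this
        rwa [mul_one]
    rw [hinv] at htt
    obtain ⟨-, x, hx0, h1, h2⟩ := htt
    have hx : x ∈ T := hroots u x hx0 h1
    have htx : t * x ∈ T := hroots u (t * x) (mul_ne_zero ht0 hx0) h2
    have : t = (t * x) * x⁻¹ := (mul_inv_cancel_right₀ hx0 t).symm
    rw [this]
    exact Set.mem_image2_of_mem htx hx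
  exact hqinf ((hSfin.insert 0).subset hsub)
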